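/- A graph U satisfies that both U and its complement are claw-free if and only if for every 4-tuple (x, y, a, b) of distinct vertices of U, the conditions U({x,a}) = U({x,b}), U({y,a}) = U({y,b}) and U({x,a}) ≠ U({y,a}) imply U({x,y}) = U({a,b}), where for an unordered pair e of distinct vertices one sets U(e) = 1 if e is an edge of U and U(e) = 0 otherwise. -/

import Mathlib

open SimpleGraph

/-- The claw `K_{1,3}`: vertex 0 joined to each of the pairwise
    nonadjacent vertices 1, 2, 3. -/
def claw : SimpleGraph (Fin 4) := SimpleGraph.fromRel (fun a _ => a = 0)

/-- A graph is claw-free if it has no induced subgraph isomorphic to `K_{1,3}`. -/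
def ClawFree {V : Type*} (G : SimpleGraph V) : Prop := IsEmpty (claw ↪g G)

lemma claw_adj (i j : Fin 4) : claw.Adj i j ↔ i ≠ j ∧ (i = 0 ∨ j = 0) := by
  simp [claw, SimpleGraph.fromRel_adj]

lemma claw_of {V : Type*} {G : SimpleGraph V} {c a b d : V}
    (hab : a ≠ b) (had : a ≠ d) (hbd : b ≠ d)
    (h1 : G.Adj c a) (h2 : G.Adj c b) (h3 : G.Adj c d)
    (n1 : ¬ G.Adj a b) (n2 : ¬ G.Adj a d) (n3 : ¬ G.Adj b d) :
    Nonempty (claw ↪g G) := by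
  have hca := h1.ne
  have hcb := h2.ne
  have hcd := h3.ne
  have n1' : ¬ G.Adj b a := fun h => n1 h.symm
  have n2' : ¬ G.Adj d a := fun h => n2 h.symm
  have n3' : ¬ G.Adj d b := fun h => n3 h.symm
  refine ⟨⟨⟨![c, a, b, d], ?_⟩, ?_⟩⟩
  · intro i j hij
    fin_cases i <;> fin_cases j <;> simp_all
  · intro i j
    change G.Adj (![c, a, b, d] i) (![c, a, b, d] j) ↔ _
    fin_cases i <;> fin_cases j <;>
      simp [claw_adj, hca, hcb, hcd, hab, had, hbd, h1, h2, h3, n1, n2, n3, n1', n2', n3',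
        h1.symm, h2.symm, h3.symm, G.irrefl, hca.symm, hcb.symm, hcd.symm,
        hab.symm, had.symm, hbd.symm, fun h => n1 (G.adj_symm h), fun h => n2 (G.adj_symm h),
        fun h => n3 (G.adj_symm h)]

/-- `U` and its complement are both claw-free iff for every 4-tuple
    `(x, y, a, b)` of distinct vertices, `U({x,a}) = U({x,b})`,
    `U({y,a}) = U({y,b})` and `U({x,a}) ≠ U({y,a})` imply
    `U({x,y}) = U({a,b})`. -/
theorem clawfree_both_iff_syntactic {V : Type*} [Fintype V] (U : SimpleGraph V) :
    (ClawFree U ∧ ClawFree Uᶜ) ↔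
      ∀ x y a b : V, x ≠ y → x ≠ a → x ≠ b → y ≠ a → y ≠ b → a ≠ b →
        (U.Adj x a ↔ U.Adj x b) → (U.Adj y a ↔ U.Adj y b) →
        ¬ (U.Adj x a ↔ U.Adj y a) → (U.Adj x y ↔ U.Adj a b) := by
  constructor
  · rintro ⟨hU, hUc⟩
    -- key: the case U.Adj x a
    have key : ∀ x y a b : V, x ≠ y → x ≠ a → x ≠ b → y ≠ a → y ≠ b → a ≠ b →
        U.Adj x a → U.Adj x b → ¬ U.Adj y a → ¬ U.Adj y b →
        (U.Adj x y ↔ U.Adj a b) := by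
      intro x y a b hxy hxa hxb hya hyb hab Hxa Hxb Hya Hyb
      by_contra hcon
      by_cases Hxy : U.Adj x y
      · have Hab : ¬ U.Adj a b := fun hh => hcon ⟨fun _ => hh, fun _ => Hxy⟩
        obtain ⟨f⟩ := claw_of hya hyb hab Hxy Hxa Hxb Hya Hyb Hab
        exact hU.false f
      · have Hab : U.Adj a b := by
          by_contra hh; exact hcon ⟨fun h' => absurd h' Hxy, fun h' => absurd h' hh⟩
        obtain ⟨f⟩ := claw_of hxa hxb hab
          (Uᶜ.adj_symm ((compl_adj _ _ _).mpr ⟨hxy, Hxy⟩))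
          ((compl_adj _ _ _).mpr ⟨hya, Hya⟩)
          ((compl_adj _ _ _).mpr ⟨hyb, Hyb⟩)
          (fun hh => ((compl_adj _ _ _).mp hh).2 Hxa)
          (fun hh => ((compl_adj _ _ _).mp hh).2 Hxb)
          (fun hh => ((compl_adj _ _ _).mp hh).2 Hab)
        exact hUc.false f
    intro x y a b hxy hxa hxb hya hyb hab hiff1 hiff2 hne
    by_cases Hxa : U.Adj x a
    · exact key x y a b hxy hxa hxb hya hyb hab Hxa (hiff1.mp Hxa)
        (fun h => hne ⟨fun _ => h, fun _ => Hxa⟩)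
        (fun h => hne ⟨fun _ => hiff2.mpr h, fun _ => Hxa⟩)
    · have Hya : U.Adj y a := by
        by_contra h; exact hne ⟨fun h' => absurd h' Hxa, fun h' => absurd h' h⟩
      have := key y x a b hxy.symm hya hyb hxa hxb hab Hya (hiff2.mp Hya) Hxa
        (fun h => Hxa (hiff1.mpr h))
      rw [U.adj_comm y x] at this
      exact this
  · intro h
    constructor
    · constructor
      intro e
      have hinj := e.injective
      have adj01 : U.Adj (e 0) (e 1) := e.map_rel_iff.mpr (by rw [claw_adj]; simp)
      have adj02 : U.Adj (e 0) (e 2) := e.map_rel_iff.mpr (by rw [claw_adj]; simp)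
      have adj03 : U.Adj (e 0) (e 3) := e.map_rel_iff.mpr (by rw [claw_adj]; simp)
      have n12 : ¬ U.Adj (e 1) (e 2) := fun hh => by
        have := e.map_rel_iff.mp hh; rw [claw_adj] at this; simp at this
      have n13 : ¬ U.Adj (e 1) (e 3) := fun hh => by
        have := e.map_rel_iff.mp hh; rw [claw_adj] at this; simp at this
      have n23 : ¬ U.Adj (e 2) (e 3) := fun hh => by
        have := e.map_rel_iff.mp hh; rw [claw_adj] at this; simp at this
      have d01 : e 0 ≠ e 1 := fun hh => by have := hinj hh; simp at this
      have d23 : e 2 ≠ e 3 := fun hh => by have := hinj hh; simp at this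
      have d02 : e 0 ≠ e 2 := fun hh => by have := hinj hh; simp at this
      have d03 : e 0 ≠ e 3 := fun hh => by have := hinj hh; simp at this
      have d12 : e 1 ≠ e 2 := fun hh => by have := hinj hh; simp at this
      have d13 : e 1 ≠ e 3 := fun hh => by have := hinj hh; simp at this
      have := h (e 0) (e 1) (e 2) (e 3) d01 d02 d03 d12 d13 d23
        ⟨fun _ => adj03, fun _ => adj02⟩ ⟨fun hh => absurd hh n12, fun hh => absurd hh n13⟩
        (fun hh => n12 (hh.mp adj02))
      exact n23 (this.mp adj01)
    · constructor
      intro e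
      have hinj := e.injective
      have adj01 : Uᶜ.Adj (e 0) (e 1) := e.map_rel_iff.mpr (by rw [claw_adj]; simp)
      have adj02 : Uᶜ.Adj (e 0) (e 2) := e.map_rel_iff.mpr (by rw [claw_adj]; simp)
      have adj03 : Uᶜ.Adj (e 0) (e 3) := e.map_rel_iff.mpr (by rw [claw_adj]; simp)
      have n12 : ¬ Uᶜ.Adj (e 1) (e 2) := fun hh => by
        have := e.map_rel_iff.mp hh; rw [claw_adj] at this; simp at this
      have n13 : ¬ Uᶜ.Adj (e 1) (e 3) := fun hh => by
        have := e.map_rel_iff.mp hh; rw [claw_adj] at this; simp at this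
      have n23 : ¬ Uᶜ.Adj (e 2) (e 3) := fun hh => by
        have := e.map_rel_iff.mp hh; rw [claw_adj] at this; simp at this
      have d01 : e 0 ≠ e 1 := fun hh => by have := hinj hh; simp at this
      have d23 : e 2 ≠ e 3 := fun hh => by have := hinj hh; simp at this
      have d02 : e 0 ≠ e 2 := fun hh => by have := hinj hh; simp at this
      have d03 : e 0 ≠ e 3 := fun hh => by have := hinj hh; simp at this
      have d12 : e 1 ≠ e 2 := fun hh => by have := hinj hh; simp at this
      have d13 : e 1 ≠ e 3 := fun hh => by have := hinj hh; simp at this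
      -- translate complement adjacency
      rw [compl_adj] at adj01 adj02 adj03
      have A12 : U.Adj (e 1) (e 2) := by
        by_contra hh; exact n12 (compl_adj _ _ _ |>.mpr ⟨d12, hh⟩)
      have A13 : U.Adj (e 1) (e 3) := by
        by_contra hh; exact n13 (compl_adj _ _ _ |>.mpr ⟨d13, hh⟩)
      have A23 : U.Adj (e 2) (e 3) := by
        by_contra hh; exact n23 (compl_adj _ _ _ |>.mpr ⟨d23, hh⟩)
      -- x = e1, y = e0, a = e2, b = e3
      have := h (e 1) (e 0) (e 2) (e 3) d01.symm d12 d13 d02 d03 d23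
        ⟨fun _ => A13, fun _ => A12⟩
        ⟨fun hh => absurd hh adj02.2, fun hh => absurd hh adj03.2⟩
        (fun hh => adj02.2 (hh.mp A12))
      rw [U.adj_comm (e 1) (e 0)] at this
      exact adj01.2 (this.mpr A23)
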